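/- arXiv:1404.1401 — 4 statements merged into one kernel-verified Lean document; each statement's English description precedes it below -/
import Mathlib

section
/- Let m > 0 and let p = (p⁰, p⃗) ∈ M_ℂ be a point of the complexified mass shell. Then |Im p⁰| ≤ |Im p⃗|, and moreover |Im p⃗| ≤ |Im p| ≤ √2 · |Im p⃗|. -/
open Matrix MeasureTheory
open scoped BigOperators Pointwise ComplexOrder ENNReal NNReal

noncomputable section

/-- Euclidean norm on `ℂ⁴`. -/
def enorm4 (p : Fin 4 → ℂ) : ℝ := Real.sqrt (∑ i, ‖p i‖ ^ 2)

/-- Euclidean norm on `ℂ³`. -/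
def enorm3 (p : Fin 3 → ℂ) : ℝ := Real.sqrt (∑ i, ‖p i‖ ^ 2)

/-- Euclidean norm of the (componentwise) imaginary part of a vector in `ℂ⁴`. -/
def imNorm4 (p : Fin 4 → ℂ) : ℝ := Real.sqrt (∑ i, (p i).im ^ 2)

/-- Euclidean norm of the (componentwise) imaginary part of a vector in `ℂ³`. -/
def imNorm3 (p : Fin 3 → ℂ) : ℝ := Real.sqrt (∑ i, (p i).im ^ 2)

/-- The spatial part `p⃗` of a four-vector `p = (p⁰, p⃗)`. -/
def spat (p : Fin 4 → ℂ) : Fin 3 → ℂ := fun i => p i.succ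

/-- The complexified mass shell `M_ℂ = {p ∈ ℂ⁴ | (p⁰)² - (p¹)² - (p²)² - (p³)² = m²}`. -/
def MassShellC (m : ℝ) : Set (Fin 4 → ℂ) :=
  {p | p 0 ^ 2 - p 1 ^ 2 - p 2 ^ 2 - p 3 ^ 2 = (m : ℂ) ^ 2}

/-- Geometric properties of the complexified mass shell, part 1
(Lemma: `|Im p⁰| ≤ |Im p⃗|` and `|Im p⃗| ≤ |Im p| ≤ √2 |Im p⃗|`). -/
theorem massShell_im_bounds (m : ℝ) (hm : 0 < m) (p : Fin 4 → ℂ)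
    (hp : p ∈ MassShellC m) :
    |(p 0).im| ≤ imNorm3 (spat p) ∧
      imNorm3 (spat p) ≤ imNorm4 p ∧ imNorm4 p ≤ Real.sqrt 2 * imNorm3 (spat p) := by
  have hp' : p 0 ^ 2 - p 1 ^ 2 - p 2 ^ 2 - p 3 ^ 2 = (m : ℂ) ^ 2 := hp
  set a := (p 0).re with ha
  set b := (p 0).im with hb
  set u1 := (p 1).re; set v1 := (p 1).im
  set u2 := (p 2).re; set v2 := (p 2).im
  set u3 := (p 3).re; set v3 := (p 3).im
  have hre : a^2 - b^2 - (u1^2 - v1^2) - (u2^2 - v2^2) - (u3^2 - v3^2) = m^2 := by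
    have := congrArg Complex.re hp'
    simpa [Complex.sub_re, pow_two, Complex.mul_re, Complex.mul_im] using this
  have him : a*b - u1*v1 - u2*v2 - u3*v3 = 0 := by
    have := congrArg Complex.im hp'
    simp [Complex.sub_im, pow_two, Complex.mul_re, Complex.mul_im] at this
    linarith
  have key : b^2 ≤ v1^2 + v2^2 + v3^2 := by
    by_contra h
    push_neg at h
    have hb2 : 0 < b^2 := by nlinarith [sq_nonneg v1, sq_nonneg v2, sq_nonneg v3]
    have hU : u1^2 + u2^2 + u3^2 < a^2 := by nlinarith [mul_pos hm hm]
    have hcs : (u1*v1 + u2*v2 + u3*v3)^2 ≤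
        (u1^2 + u2^2 + u3^2) * (v1^2 + v2^2 + v3^2) := by
      nlinarith [sq_nonneg (u1*v2 - u2*v1), sq_nonneg (u1*v3 - u3*v1),
        sq_nonneg (u2*v3 - u3*v2)]
    have hab : a * b = u1*v1 + u2*v2 + u3*v3 := by linarith
    have heq : a^2 * b^2 = (u1*v1 + u2*v2 + u3*v3)^2 := by rw [← hab]; ring
    have h1 : (u1^2 + u2^2 + u3^2) * b^2 < a^2 * b^2 :=
      mul_lt_mul_of_pos_right hU hb2
    have h2 : (u1^2 + u2^2 + u3^2) * (v1^2 + v2^2 + v3^2) ≤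
        (u1^2 + u2^2 + u3^2) * b^2 :=
      mul_le_mul_of_nonneg_left h.le (by positivity)
    linarith
  have hS3 : (∑ i, (spat p i).im ^ 2) = v1^2 + v2^2 + v3^2 := by
    rw [Fin.sum_univ_three]; rfl
  have hS4 : (∑ i, (p i).im ^ 2) = b^2 + (v1^2 + v2^2 + v3^2) := by
    simp [Fin.sum_univ_four]; ring
  have hV : 0 ≤ v1^2 + v2^2 + v3^2 := by positivity
  refine ⟨?_, ?_, ?_⟩
  · rw [imNorm3, hS3]
    rw [show |b| = Real.sqrt (b^2) by rw [Real.sqrt_sq_eq_abs]]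
    exact Real.sqrt_le_sqrt key
  · rw [imNorm3, imNorm4, hS3, hS4]
    apply Real.sqrt_le_sqrt; nlinarith [sq_nonneg b]
  · rw [imNorm3, imNorm4, hS3, hS4, ← Real.sqrt_mul (by norm_num : (0:ℝ) ≤ 2)]
    apply Real.sqrt_le_sqrt; linarith
end
end

section
/- For every m > 0 and every ε > 0 there exists a constant C = C(ε, m) > 0 such that for all p = (p⁰, p⃗) ∈ M_ℂ one has max(m, |p⃗|) ≤ C · max(m/12, |p⁰|) · e^{ε|Im p⃗|}. -/
open Matrix MeasureTheory
open scoped BigOperators Pointwise ComplexOrder ENNReal NNReal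

noncomputable section

private lemma massShell_aux (m ε A B a : ℝ) (hm : 0 < m) (hε : 0 < ε)
    (hA0 : 0 ≤ A) (hB0 : 0 ≤ B) (ha0 : 0 ≤ a)
    (key : m ^ 2 + A - B ≤ a ^ 2) :
    max m (Real.sqrt (A + B)) ≤
      (13 + 12 * Real.sqrt 2 / (ε * m)) * max (m / 12) a * Real.exp (ε * Real.sqrt B) := by
  have hs2 : (0:ℝ) ≤ Real.sqrt 2 := Real.sqrt_nonneg 2
  have hs2' : Real.sqrt 2 ^ 2 = 2 := Real.sq_sqrt (by norm_num)
  set b : ℝ := Real.sqrt B with hb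
  have hb0 : 0 ≤ b := Real.sqrt_nonneg _
  have hbsq : b ^ 2 = B := Real.sq_sqrt hB0
  have hab0 : 0 ≤ a + Real.sqrt 2 * b := by positivity
  have hrab : Real.sqrt (A + B) ≤ a + Real.sqrt 2 * b := by
    have h1 : A + B ≤ (a + Real.sqrt 2 * b) ^ 2 := by
      nlinarith [mul_nonneg (mul_nonneg ha0 hs2) hb0]
    calc Real.sqrt (A + B) ≤ Real.sqrt ((a + Real.sqrt 2 * b) ^ 2) :=
          Real.sqrt_le_sqrt h1
      _ = a + Real.sqrt 2 * b := Real.sqrt_sq hab0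
  have hE1 : 1 ≤ Real.exp (ε * b) := Real.one_le_exp (by positivity)
  have hE0 : 0 < Real.exp (ε * b) := Real.exp_pos _
  have hbE : ε * b ≤ Real.exp (ε * b) := by
    have := Real.add_one_le_exp (ε * b); linarith
  set E : ℝ := Real.exp (ε * b) with hE
  set M : ℝ := max (m / 12) a with hM
  have hM1 : m / 12 ≤ M := le_max_left _ _
  have hM2 : a ≤ M := le_max_right _ _
  have hM0 : 0 < M := lt_of_lt_of_le (by linarith) hM1
  rw [max_le_iff]
  constructor
  · have hdiv : 0 ≤ 12 * Real.sqrt 2 / (ε * m) := by positivity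
    have h12 : m ≤ 12 * M := by linarith
    have h13 : 12 * M ≤ 12 * (M * E) := by nlinarith
    nlinarith [mul_nonneg hdiv (mul_pos hM0 hE0).le]
  · have h2 : Real.sqrt 2 * b ≤ Real.sqrt 2 * (E / ε) := by
      apply mul_le_mul_of_nonneg_left _ hs2
      rw [le_div_iff₀ hε]
      linarith [hbE]
    calc Real.sqrt (A + B) ≤ a + Real.sqrt 2 * b := hrab
      _ ≤ M + Real.sqrt 2 * (E / ε) := by linarith
      _ ≤ (13 + 12 * Real.sqrt 2 / (ε * m)) * M * E := by
          have hME : M ≤ M * E := by nlinarith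
          have h4 : Real.sqrt 2 * (E / ε) ≤ 12 * Real.sqrt 2 / (ε * m) * M * E := by
            have h12 : m ≤ 12 * M := by linarith
            rw [div_mul_eq_mul_div, div_mul_eq_mul_div, ← mul_div_assoc,
              div_le_div_iff₀ hε (by positivity)]
            nlinarith [mul_nonneg (mul_nonneg (mul_nonneg hs2 hE0.le) hε.le)
              (sub_nonneg.2 h12)]
          nlinarith

/-- Geometric properties of the complexified mass shell, part 3:
`m ∨ |p⃗| ≤ C (m/12 ∨ |p⁰|) e^{ε|Im p⃗|}` with `C = C(ε, m)`. -/
theorem massShell_spatial_bound (m ε : ℝ) (hm : 0 < m) (hε : 0 < ε) :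
    ∃ C > 0, ∀ p ∈ MassShellC m,
      max m (enorm3 (spat p)) ≤ C * max (m / 12) ‖p 0‖ * Real.exp (ε * imNorm3 (spat p)) := by
  refine ⟨13 + 12 * Real.sqrt 2 / (ε * m), by positivity, ?_⟩
  intro p hp
  have hsq : ∀ z : ℂ, ‖z‖ ^ 2 = z.re ^ 2 + z.im ^ 2 := fun z => by
    rw [Complex.sq_norm, Complex.normSq_apply]; ring
  have hbdef : imNorm3 (spat p)
      = Real.sqrt ((p 1).im ^ 2 + (p 2).im ^ 2 + (p 3).im ^ 2) := by
    unfold imNorm3 spat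
    congr 1
    rw [Fin.sum_univ_three]
    rfl
  have hrdef : enorm3 (spat p)
      = Real.sqrt (((p 1).re ^ 2 + (p 2).re ^ 2 + (p 3).re ^ 2)
          + ((p 1).im ^ 2 + (p 2).im ^ 2 + (p 3).im ^ 2)) := by
    unfold enorm3 spat
    congr 1
    rw [Fin.sum_univ_three]
    show ‖p 1‖ ^ 2 + ‖p 2‖ ^ 2 + ‖p 3‖ ^ 2 = _
    rw [hsq, hsq, hsq]; ring
  rw [hbdef, hrdef]
  apply massShell_aux m ε _ _ _ hm hε (by positivity) (by positivity) (norm_nonneg _)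
  -- key inequality from the mass shell equation
  have h0 : (p 0) ^ 2 = (m:ℂ) ^ 2 + p 1 ^ 2 + p 2 ^ 2 + p 3 ^ 2 := by
    have h := hp
    simp only [MassShellC, Set.mem_setOf_eq] at h
    linear_combination h
  have hre := congrArg Complex.re h0
  simp [pow_two, Complex.mul_re, Complex.add_re] at hre
  have hnorm : ‖p 0‖ ^ 2 = (p 0).re ^ 2 + (p 0).im ^ 2 := hsq (p 0)
  nlinarith [sq_nonneg (p 0).im]
end
end

section
/- Let m > 0 and let p = (p⁰, p⃗) ∈ M_ℂ with |p⁰| ≤ m/12. Then there exists a map k = (k⁰, k⃗) : ℂ → ℂ⁴, holomorphic on an open neighborhood of the closed unit disc Δ̄ = {t ∈ ℂ : |t| ≤ 1}, such that k(t) ∈ M_ℂ for all t ∈ Δ̄, k(0) = p, |k⃗(t) − p⃗| ≤ m/6 for all t ∈ Δ̄, and |k⁰(t)| ≥ m/12 for all t with |t| = 1. -/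
open Matrix MeasureTheory
open scoped BigOperators Pointwise ComplexOrder ENNReal NNReal

noncomputable section

lemma exp_taylor3 (z : ℂ) (h : ‖z‖ ≤ 1) :
    ‖Complex.exp z - (1 + z + z ^ 2 / 2)‖ ≤ 2 / 9 * ‖z‖ ^ 3 := by
  have h' : ‖z‖ ≤ 1 := h
  have hb := Complex.exp_bound h' (n := 3) (by norm_num)
  have hsum : ∑ m ∈ Finset.range 3, z ^ m / m.factorial = 1 + z + z ^ 2 / 2 := by
    simp [Finset.sum_range_succ, Nat.factorial]
  rw [hsum] at hb
  calc ‖Complex.exp z - (1 + z + z ^ 2 / 2)‖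
      ≤ ‖z‖ ^ 3 * ((Nat.succ 3 : ℝ) * ((Nat.factorial 3 : ℝ) * 3)⁻¹) := hb
    _ = 2 / 9 * ‖z‖ ^ 3 := by norm_num [Nat.factorial]; ring

lemma cosh_taylor (z : ℂ) (h : ‖z‖ ≤ 1) :
    ‖Complex.cosh z - 1‖ ≤ ‖z‖ ^ 2 / 2 + 2 / 9 * ‖z‖ ^ 3 := by
  have e1 := exp_taylor3 z h
  have e2 := exp_taylor3 (-z) (by rwa [norm_neg])
  have h2 := Complex.two_cosh z
  have hid : Complex.cosh z - 1 = z ^ 2 / 2 +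
      ((Complex.exp z - (1 + z + z ^ 2 / 2)) +
        (Complex.exp (-z) - (1 + (-z) + (-z) ^ 2 / 2))) / 2 := by
    linear_combination h2 / 2
  rw [hid]
  have hn : ‖z ^ 2 / 2‖ = ‖z‖ ^ 2 / 2 := by
    rw [norm_div, norm_pow]; norm_num
  calc ‖z ^ 2 / 2 + _‖ ≤ ‖z ^ 2 / 2‖ + ‖((Complex.exp z - (1 + z + z ^ 2 / 2)) +
        (Complex.exp (-z) - (1 + (-z) + (-z) ^ 2 / 2))) / 2‖ := norm_add_le _ _
    _ ≤ ‖z‖ ^ 2 / 2 + (‖Complex.exp z - (1 + z + z ^ 2 / 2)‖ +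
        ‖Complex.exp (-z) - (1 + (-z) + (-z) ^ 2 / 2)‖) / 2 := by
        rw [hn, norm_div]
        have := norm_add_le (Complex.exp z - (1 + z + z ^ 2 / 2))
          (Complex.exp (-z) - (1 + (-z) + (-z) ^ 2 / 2))
        have h2' : ‖(2:ℂ)‖ = 2 := by norm_num
        rw [h2']
        gcongr
    _ ≤ ‖z‖ ^ 2 / 2 + 2 / 9 * ‖z‖ ^ 3 := by
        rw [norm_neg z] at e2
        linarith

lemma sinh_taylor (z : ℂ) (h : ‖z‖ ≤ 1) :
    ‖Complex.sinh z - z‖ ≤ 2 / 9 * ‖z‖ ^ 3 := by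
  have e1 := exp_taylor3 z h
  have e2 := exp_taylor3 (-z) (by rwa [norm_neg])
  have h2 := Complex.two_sinh z
  have hid : Complex.sinh z - z =
      ((Complex.exp z - (1 + z + z ^ 2 / 2)) -
        (Complex.exp (-z) - (1 + (-z) + (-z) ^ 2 / 2))) / 2 := by
    linear_combination h2 / 2
  rw [hid, norm_div]
  have h2' : ‖(2:ℂ)‖ = 2 := by norm_num
  rw [h2']
  have := norm_sub_le (Complex.exp z - (1 + z + z ^ 2 / 2))
    (Complex.exp (-z) - (1 + (-z) + (-z) ^ 2 / 2))
  rw [norm_neg z] at e2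
  linarith

lemma est1 (m : ℝ) (hm : 0 < m) (a s z : ℂ) (ha : ‖a‖ ≤ m / 12)
    (hz : ‖z‖ ≤ 2 / 5) (hsz : ‖s‖ * ‖z‖ ≤ m / 5) :
    ‖s * Complex.cosh z + a * Complex.sinh z - s‖ ≤ m / 6 := by
  have hz1 : ‖z‖ ≤ 1 := by linarith
  have hc := cosh_taylor z hz1
  have hsi := sinh_taylor z hz1
  have hr0 : (0:ℝ) ≤ ‖z‖ := norm_nonneg z
  have hs0 : (0:ℝ) ≤ ‖s‖ := norm_nonneg s
  have ha0 : (0:ℝ) ≤ ‖a‖ := norm_nonneg a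
  have hsh : ‖Complex.sinh z‖ ≤ ‖z‖ + 2 / 9 * ‖z‖ ^ 3 := by
    have : ‖Complex.sinh z‖ = ‖z + (Complex.sinh z - z)‖ := by congr 1; ring
    rw [this]
    calc ‖z + (Complex.sinh z - z)‖ ≤ ‖z‖ + ‖Complex.sinh z - z‖ := norm_add_le _ _
      _ ≤ _ := by linarith
  have step : ‖s * Complex.cosh z + a * Complex.sinh z - s‖ ≤
      ‖s‖ * ‖Complex.cosh z - 1‖ + ‖a‖ * ‖Complex.sinh z‖ := by
    have he : s * Complex.cosh z + a * Complex.sinh z - s =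
        s * (Complex.cosh z - 1) + a * Complex.sinh z := by ring
    rw [he]
    calc ‖s * (Complex.cosh z - 1) + a * Complex.sinh z‖
        ≤ ‖s * (Complex.cosh z - 1)‖ + ‖a * Complex.sinh z‖ := norm_add_le _ _
      _ = _ := by rw [norm_mul, norm_mul]
  have hsz3 : ‖s‖ * ‖z‖ ^ 3 ≤ m / 5 * ‖z‖ ^ 2 := by nlinarith
  have hsz2 : ‖s‖ * ‖z‖ ^ 2 ≤ m / 5 * ‖z‖ := by nlinarith
  have h1 : ‖s‖ * ‖Complex.cosh z - 1‖ ≤ m / 5 * ‖z‖ / 2 + 2 / 9 * (m / 5) * ‖z‖ ^ 2 := by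
    nlinarith [mul_le_mul_of_nonneg_left hc hs0]
  have h2 : ‖a‖ * ‖Complex.sinh z‖ ≤ m / 12 * (‖z‖ + 2 / 9 * ‖z‖ ^ 3) := by
    nlinarith [mul_le_mul ha hsh (norm_nonneg _) (by linarith : (0:ℝ) ≤ m / 12)]
  have hr2 : ‖z‖ ^ 2 ≤ 2 / 5 * ‖z‖ := by nlinarith
  have hr3 : ‖z‖ ^ 3 ≤ 8 / 125 := by nlinarith
  nlinarith [step, h1, h2, mul_le_mul_of_nonneg_left hz (le_of_lt hm)]

lemma est2 (m : ℝ) (hm : 0 < m) (a s z : ℂ) (ha : ‖a‖ ≤ m / 12)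
    (hz : ‖z‖ ≤ 2 / 5) (hsz : ‖s‖ * ‖z‖ = m / 5) :
    m / 12 ≤ ‖a * Complex.cosh z + s * Complex.sinh z‖ := by
  have hz1 : ‖z‖ ≤ 1 := by linarith
  have hc := cosh_taylor z hz1
  have hsi := sinh_taylor z hz1
  have hr0 : (0:ℝ) ≤ ‖z‖ := norm_nonneg z
  have hs0 : (0:ℝ) ≤ ‖s‖ := norm_nonneg s
  have ha0 : (0:ℝ) ≤ ‖a‖ := norm_nonneg a
  have hcosh : ‖Complex.cosh z‖ ≤ 1 + ‖z‖ ^ 2 / 2 + 2 / 9 * ‖z‖ ^ 3 := by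
    have : ‖Complex.cosh z‖ = ‖(1:ℂ) + (Complex.cosh z - 1)‖ := by congr 1; ring
    rw [this]
    calc ‖(1:ℂ) + (Complex.cosh z - 1)‖ ≤ ‖(1:ℂ)‖ + ‖Complex.cosh z - 1‖ := norm_add_le _ _
      _ ≤ _ := by rw [norm_one]; linarith
  have t1 : ‖s * z‖ ≤ ‖s * Complex.sinh z‖ + ‖s * (Complex.sinh z - z)‖ := by
    have he : s * z = s * Complex.sinh z - s * (Complex.sinh z - z) := by ring
    rw [he]; exact norm_sub_le _ _
  have t2 : ‖s * Complex.sinh z‖ ≤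
      ‖a * Complex.cosh z + s * Complex.sinh z‖ + ‖a * Complex.cosh z‖ := by
    have he : ‖s * Complex.sinh z‖ =
        ‖(a * Complex.cosh z + s * Complex.sinh z) - a * Complex.cosh z‖ := by congr 1; ring
    rw [he]; exact norm_sub_le _ _
  simp only [norm_mul] at t1 t2
  rw [hsz] at t1
  have hsz3 : ‖s‖ * ‖z‖ ^ 3 = m / 5 * ‖z‖ ^ 2 := by
    have : ‖s‖ * ‖z‖ ^ 3 = (‖s‖ * ‖z‖) * ‖z‖ ^ 2 := by ring
    rw [this, hsz]
  have herr : ‖s‖ * ‖Complex.sinh z - z‖ ≤ 2 / 9 * (m / 5) * ‖z‖ ^ 2 := by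
    nlinarith [mul_le_mul_of_nonneg_left hsi hs0]
  have hac : ‖a‖ * ‖Complex.cosh z‖ ≤ m / 12 * (1 + ‖z‖ ^ 2 / 2 + 2 / 9 * ‖z‖ ^ 3) := by
    nlinarith [mul_le_mul ha hcosh (norm_nonneg _) (by linarith : (0:ℝ) ≤ m / 12)]
  have hr2 : ‖z‖ ^ 2 ≤ 4 / 25 := by nlinarith
  have hr3 : ‖z‖ ^ 3 ≤ 8 / 125 := by nlinarith
  nlinarith [t1, t2, herr, hac]


/-- boost disc -/
def disc (p : Fin 4 → ℂ) (α : ℂ) (j : Fin 3) : ℂ → Fin 4 → ℂ := fun t i =>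
  if i = 0 then p 0 * Complex.cosh (α * t) + p j.succ * Complex.sinh (α * t)
  else if i = j.succ then p j.succ * Complex.cosh (α * t) + p 0 * Complex.sinh (α * t)
  else p i

/-- Near the ramification set `{p⁰ = 0}` of the complexified mass shell there are
holomorphic discs keeping `p⃗` almost constant while moving `p⁰` away from `0`. -/
theorem massShell_holomorphic_disc (m : ℝ) (hm : 0 < m) (p : Fin 4 → ℂ)
    (hp : p ∈ MassShellC m) (hp0 : ‖p 0‖ ≤ m / 12) :
    ∃ k : ℂ → Fin 4 → ℂ, ∃ U : Set ℂ, IsOpen U ∧ Metric.closedBall (0 : ℂ) 1 ⊆ U ∧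
      DifferentiableOn ℂ k U ∧
      (∀ t ∈ Metric.closedBall (0 : ℂ) 1, k t ∈ MassShellC m) ∧
      k 0 = p ∧
      (∀ t ∈ Metric.closedBall (0 : ℂ) 1, enorm3 (spat (k t) - spat p) ≤ m / 6) ∧
      (∀ t : ℂ, ‖t‖ = 1 → m / 12 ≤ ‖k t 0‖) := by
  -- find a big spatial component
  have hspat : ∃ j : Fin 3, m / 2 ≤ ‖p j.succ‖ := by
    by_contra hcon
    push_neg at hcon
    have h1 : ‖p 1‖ < m / 2 := hcon 0
    have h2 : ‖p 2‖ < m / 2 := hcon 1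
    have h3 : ‖p 3‖ < m / 2 := hcon 2
    have hp' : p 0 ^ 2 - p 1 ^ 2 - p 2 ^ 2 - p 3 ^ 2 = (m : ℂ) ^ 2 := hp
    have key : p 1 ^ 2 + p 2 ^ 2 + p 3 ^ 2 = p 0 ^ 2 - (m : ℂ) ^ 2 := by
      linear_combination (-1 : ℂ) * hp'
    have hub : ‖p 1 ^ 2 + p 2 ^ 2 + p 3 ^ 2‖ < 3 * (m / 2) ^ 2 := by
      calc ‖p 1 ^ 2 + p 2 ^ 2 + p 3 ^ 2‖ ≤ ‖p 1 ^ 2‖ + ‖p 2 ^ 2‖ + ‖p 3 ^ 2‖ := by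
            calc ‖p 1 ^ 2 + p 2 ^ 2 + p 3 ^ 2‖ ≤ ‖p 1 ^ 2 + p 2 ^ 2‖ + ‖p 3 ^ 2‖ := norm_add_le _ _
              _ ≤ ‖p 1 ^ 2‖ + ‖p 2 ^ 2‖ + ‖p 3 ^ 2‖ := by
                  have := norm_add_le (p 1 ^ 2) (p 2 ^ 2); linarith
        _ < 3 * (m / 2) ^ 2 := by
            rw [norm_pow, norm_pow, norm_pow]
            nlinarith [norm_nonneg (p 1), norm_nonneg (p 2), norm_nonneg (p 3)]
    have hlb : m ^ 2 - (m / 12) ^ 2 ≤ ‖p 0 ^ 2 - (m : ℂ) ^ 2‖ := by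
      have hmn : ‖((m : ℂ)) ^ 2‖ = m ^ 2 := by
        rw [norm_pow, Complex.norm_real, Real.norm_eq_abs, abs_of_pos hm]
      have := norm_sub_norm_le ((m : ℂ) ^ 2) (p 0 ^ 2)
      have hne : ‖(m : ℂ) ^ 2 - p 0 ^ 2‖ = ‖p 0 ^ 2 - (m : ℂ) ^ 2‖ := by
        rw [← norm_neg]; congr 1; ring
      rw [hne, hmn] at this
      have hp02 : ‖p 0 ^ 2‖ ≤ (m / 12) ^ 2 := by
        rw [norm_pow]; nlinarith [norm_nonneg (p 0)]
      linarith
    rw [key] at hub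
    nlinarith
  obtain ⟨j, hj⟩ := hspat
  have hb0 : (0:ℝ) < ‖p j.succ‖ := lt_of_lt_of_le (by linarith) hj
  have hsne : p j.succ ≠ 0 := by
    intro h; rw [h, norm_zero] at hb0; exact lt_irrefl _ hb0
  set α : ℂ := ((m / 5 : ℝ) : ℂ) / p j.succ with hα
  have hmul : ∀ t : ℂ, p j.succ * (α * t) = ((m / 5 : ℝ) : ℂ) * t := by
    intro t; rw [hα]; field_simp
  have hnorm : ∀ t : ℂ, ‖p j.succ‖ * ‖α * t‖ = m / 5 * ‖t‖ := by
    intro t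
    calc ‖p j.succ‖ * ‖α * t‖ = ‖p j.succ * (α * t)‖ := (norm_mul _ _).symm
      _ = ‖((m / 5 : ℝ) : ℂ)‖ * ‖t‖ := by rw [hmul t, norm_mul]
      _ = m / 5 * ‖t‖ := by
          rw [Complex.norm_real, Real.norm_eq_abs, abs_of_pos (by linarith)]
  have hz25 : ∀ t : ℂ, ‖t‖ ≤ 1 → ‖α * t‖ ≤ 2 / 5 := by
    intro t ht
    have h1 := hnorm t
    nlinarith [norm_nonneg (α * t), norm_nonneg t, mul_le_mul_of_nonneg_left ht (by linarith : (0:ℝ) ≤ m / 5)]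
  refine ⟨disc p α j, Set.univ, isOpen_univ, Set.subset_univ _, ?_, ?_, ?_, ?_, ?_⟩
  · -- differentiability
    apply Differentiable.differentiableOn
    rw [differentiable_pi]
    intro i
    by_cases h0 : i = 0
    · simp only [disc, if_pos h0]
      exact ((Complex.differentiable_cosh.comp (differentiable_id.const_mul α)).const_mul _).add
        ((Complex.differentiable_sinh.comp (differentiable_id.const_mul α)).const_mul _)
    · by_cases h1 : i = j.succ
      · simp only [disc, if_neg h0, if_pos h1]
        exact ((Complex.differentiable_cosh.comp (differentiable_id.const_mul α)).const_mul _).add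
          ((Complex.differentiable_sinh.comp (differentiable_id.const_mul α)).const_mul _)
      · simp only [disc, if_neg h0, if_neg h1]
        exact differentiable_const _
  · -- mass shell membership
    intro t _
    have h1 : Complex.cosh (α * t) ^ 2 - Complex.sinh (α * t) ^ 2 = 1 :=
      Complex.cosh_sq_sub_sinh_sq _
    simp only [MassShellC, Set.mem_setOf_eq] at hp ⊢
    fin_cases j <;>
      simp (config := { decide := true }) only [disc,
        show ((⟨0, by norm_num⟩ : Fin 3)).succ = 1 from rfl,
        show ((⟨1, by norm_num⟩ : Fin 3)).succ = 2 from rfl,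
        show ((⟨2, by norm_num⟩ : Fin 3)).succ = 3 from rfl,
        if_true, if_false, ite_true, ite_false] <;>
      [linear_combination hp + (p 0 ^ 2 - p 1 ^ 2) * h1;
       linear_combination hp + (p 0 ^ 2 - p 2 ^ 2) * h1;
       linear_combination hp + (p 0 ^ 2 - p 3 ^ 2) * h1]
  · -- k 0 = p
    funext i
    simp only [disc, mul_zero, Complex.cosh_zero, Complex.sinh_zero, mul_one, add_zero]
    by_cases h0 : i = 0
    · rw [if_pos h0, h0]
    · rw [if_neg h0]
      by_cases h1 : i = j.succ
      · rw [if_pos h1, h1]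
      · rw [if_neg h1]
  · -- spatial estimate
    intro t ht
    rw [Metric.mem_closedBall, dist_zero_right] at ht
    have hker : ∀ i : Fin 3, i ≠ j → disc p α j t i.succ = p i.succ := by
      intro i hij
      simp only [disc]
      rw [if_neg (Fin.succ_ne_zero i), if_neg (fun h => hij (Fin.succ_injective _ h))]
    have hjval : disc p α j t j.succ =
        p j.succ * Complex.cosh (α * t) + p 0 * Complex.sinh (α * t) := by
      simp [disc, Fin.succ_ne_zero j]
    have hsum : ∑ i : Fin 3, ‖(spat (disc p α j t) - spat p) i‖ ^ 2 =
        ‖disc p α j t j.succ - p j.succ‖ ^ 2 := by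
      rw [Finset.sum_eq_single j]
      · simp [spat]
      · intro i _ hij
        simp [spat, hker i hij]
      · intro h; exact absurd (Finset.mem_univ j) h
    rw [enorm3, hsum, Real.sqrt_sq (norm_nonneg _), hjval]
    apply est1 m hm (p 0) (p j.succ) (α * t) hp0 (hz25 t ht)
    have h1 := hnorm t
    nlinarith [mul_le_mul_of_nonneg_left ht (by linarith : (0:ℝ) ≤ m / 5)]
  · -- lower bound on k t 0 for |t| = 1
    intro t ht
    have h0 : disc p α j t 0 =
        p 0 * Complex.cosh (α * t) + p j.succ * Complex.sinh (α * t) := by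
      simp [disc]
    rw [h0]
    apply est2 m hm (p 0) (p j.succ) (α * t) hp0 (hz25 t (le_of_eq ht))
    rw [hnorm t, ht, mul_one]
end
end

section
/- Let m > 0 and for p⃗ ∈ ℝ³ put P₊(p⃗) = (p̸₊(p⃗) + m) γ⁰ / (2E(p⃗)) and P₋(p⃗) = −(p̸₋(p⃗) + m) γ⁰ / (2E(p⃗)). Then: (i) P₊(p⃗) + P₋(p⃗) = I₄ and P₊(p⃗)P₋(p⃗) = 0 for all p⃗; (ii) the map F_{3M} sending a pair (ψ₊, ψ₋) to the function p⃗ ↦ m(ψ₊(p⃗) − ψ₋(p⃗))/E(p⃗) is a unitary isomorphism from the Hilbert space H_M of (a.e.-equivalence classes of) pairs of measurable functions ψ₊, ψ₋ : ℝ³ → ℂ⁴ with P₊(p⃗)ψ₊(p⃗) = ψ₊(p⃗) and P₋(p⃗)ψ₋(p⃗) = ψ₋(p⃗) almost everywhere and squared norm m² ∫_{ℝ³} (|ψ₊(p⃗)|² + |ψ₋(p⃗)|²) E(p⃗)^{-2} d³p⃗ < ∞, onto L²(ℝ³, ℂ⁴); its inverse F_{M3} is given by φ ↦ ( (E/m)P₊φ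 , −(E/m)P₋φ ). -/
open Matrix MeasureTheory
open scoped BigOperators Pointwise ComplexOrder ENNReal NNReal

noncomputable section

/-- The Dirac gamma matrix `γ⁰` in the standard representation. -/
def γ0 : Matrix (Fin 4) (Fin 4) ℂ :=
  !![1, 0, 0, 0; 0, 1, 0, 0; 0, 0, -1, 0; 0, 0, 0, -1]

/-- The Dirac gamma matrix `γ¹`. -/
def γ1 : Matrix (Fin 4) (Fin 4) ℂ :=
  !![0, 0, 0, 1; 0, 0, 1, 0; 0, -1, 0, 0; -1, 0, 0, 0]

/-- The Dirac gamma matrix `γ²`. -/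
def γ2 : Matrix (Fin 4) (Fin 4) ℂ :=
  !![0, 0, 0, -Complex.I; 0, 0, Complex.I, 0; 0, Complex.I, 0, 0; -Complex.I, 0, 0, 0]

/-- The Dirac gamma matrix `γ³`. -/
def γ3 : Matrix (Fin 4) (Fin 4) ℂ :=
  !![0, 0, 1, 0; 0, 0, 0, -1; -1, 0, 0, 0; 0, 1, 0, 0]

/-- The family `μ ↦ γ^μ`. -/
def gam : Fin 4 → Matrix (Fin 4) (Fin 4) ℂ := ![γ0, γ1, γ2, γ3]

/-- Feynman slash of a four-vector (with upper indices):
`p̸ = p⁰γ⁰ - p¹γ¹ - p²γ² - p³γ³`. -/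
def slash (p : Fin 4 → ℂ) : Matrix (Fin 4) (Fin 4) ℂ :=
  p 0 • γ0 - p 1 • γ1 - p 2 • γ2 - p 3 • γ3

/-- Slash of a covector (lower indices): `A̸ = ∑ μ, A_μ γ^μ`. -/
def slashLow (a : Fin 4 → ℂ) : Matrix (Fin 4) (Fin 4) ℂ := ∑ μ, a μ • gam μ

/-- Complexification of a real four-vector. -/
def cv4 (p : Fin 4 → ℝ) : Fin 4 → ℂ := fun μ => (p μ : ℂ)

/-- The relativistic energy `E(p⃗) = √(|p⃗|² + m²)`. -/
def Efun (m : ℝ) (q : Fin 3 → ℝ) : ℝ := Real.sqrt ((∑ i, q i ^ 2) + m ^ 2)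

/-- The point `p₊(p⃗) = (E(p⃗), p⃗)` on the upper mass shell. -/
def pPlus (m : ℝ) (q : Fin 3 → ℝ) : Fin 4 → ℝ := Fin.cons (Efun m q) q

/-- The point `p₋(p⃗) = (-E(p⃗), p⃗)` on the lower mass shell. -/
def pMinus (m : ℝ) (q : Fin 3 → ℝ) : Fin 4 → ℝ := Fin.cons (-Efun m q) q

/-- Minkowski inner product `px = p⁰x⁰ - p⃗·x⃗` of real four-vectors. -/
def mink (p x : Fin 4 → ℝ) : ℝ := p 0 * x 0 - (p 1 * x 1 + p 2 * x 2 + p 3 * x 3)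

/-- The projection `P₊(p⃗) = (p̸₊(p⃗) + m)γ⁰/(2E(p⃗))`. -/
def Pplus (m : ℝ) (q : Fin 3 → ℝ) : Matrix (Fin 4) (Fin 4) ℂ :=
  (2 * (Efun m q : ℂ))⁻¹ • ((slash (cv4 (pPlus m q)) + (m : ℂ) • 1) * γ0)

/-- The projection `P₋(p⃗) = -(p̸₋(p⃗) + m)γ⁰/(2E(p⃗))`. -/
def Pminus (m : ℝ) (q : Fin 3 → ℝ) : Matrix (Fin 4) (Fin 4) ℂ :=
  (-(2 * (Efun m q : ℂ))⁻¹) • ((slash (cv4 (pMinus m q)) + (m : ℂ) • 1) * γ0)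

/-! ### Auxiliary lemmas -/

set_option maxHeartbeats 4000000 in
lemma gamma_slash_sq (p : Fin 4 → ℂ) :
    slash p * slash p = (p 0 ^ 2 - p 1 ^ 2 - p 2 ^ 2 - p 3 ^ 2) • 1 := by
  ext i j
  fin_cases i <;> fin_cases j <;>
    · simp [slash, cv4, γ0, γ1, γ2, γ3, Matrix.mul_apply, Fin.sum_univ_four,
        Matrix.one_apply, Matrix.conjTranspose_apply, Complex.conj_ofReal,
        Matrix.vecHead, Matrix.vecTail]
      all_goals try ring
      all_goals try (ring_nf; simp [Complex.I_sq])
      all_goals try ring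
      all_goals (simp only [Complex.I_sq]; ring)


lemma gamma_g00 : γ0 * γ0 = 1 := by
  ext i j
  fin_cases i <;> fin_cases j <;>
    simp [γ0, Matrix.mul_apply, Fin.sum_univ_four, Matrix.one_apply, Matrix.vecHead,
      Matrix.vecTail]

set_option maxHeartbeats 4000000 in
lemma gamma_g0_slash_g0 (p : Fin 4 → ℂ) :
    γ0 * slash p * γ0 = slash ![p 0, -p 1, -p 2, -p 3] := by
  ext i j
  fin_cases i <;> fin_cases j <;>
    · simp [slash, cv4, γ0, γ1, γ2, γ3, Matrix.mul_apply, Fin.sum_univ_four,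
        Matrix.one_apply, Matrix.conjTranspose_apply, Complex.conj_ofReal,
        Matrix.vecHead, Matrix.vecTail]
      all_goals try ring
      all_goals try (ring_nf; simp [Complex.I_sq])
      all_goals try ring


set_option maxHeartbeats 4000000 in
lemma gamma_slash_conjT (p : Fin 4 → ℝ) :
    (slash (cv4 p))ᴴ = γ0 * slash (cv4 p) * γ0 := by
  ext i j
  fin_cases i <;> fin_cases j <;>
    · simp [slash, cv4, γ0, γ1, γ2, γ3, Matrix.mul_apply, Fin.sum_univ_four,
        Matrix.one_apply, Matrix.conjTranspose_apply, Complex.conj_ofReal,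
        Matrix.vecHead, Matrix.vecTail]
      all_goals try ring
      all_goals try (ring_nf; simp [Complex.I_sq])
      all_goals try ring


lemma gamma_g0H : γ0ᴴ = γ0 := by
  ext i j
  fin_cases i <;> fin_cases j <;>
    simp [γ0, Matrix.conjTranspose_apply, Matrix.vecHead, Matrix.vecTail]

/-! Basic facts about `Efun`. -/

lemma Efun_pos (m : ℝ) (hm : 0 < m) (q : Fin 3 → ℝ) : 0 < Efun m q := by
  apply Real.sqrt_pos.2
  positivity

lemma Efun_sq (m : ℝ) (hm : 0 < m) (q : Fin 3 → ℝ) :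
    Efun m q ^ 2 = (∑ i, q i ^ 2) + m ^ 2 := by
  apply Real.sq_sqrt
  positivity

lemma Efun_ne (m : ℝ) (hm : 0 < m) (q : Fin 3 → ℝ) : Efun m q ≠ 0 :=
  (Efun_pos m hm q).ne'

lemma EfunC_ne (m : ℝ) (hm : 0 < m) (q : Fin 3 → ℝ) : (Efun m q : ℂ) ≠ 0 := by
  exact_mod_cast Complex.ofReal_ne_zero.2 (Efun_ne m hm q)

lemma Efun_continuous (m : ℝ) : Continuous (Efun m) := by
  unfold Efun
  exact Real.continuous_sqrt.comp
    ((continuous_finset_sum _ fun i _ => (continuous_apply i).pow 2).add continuous_const)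

/-! Evaluations of `cv4 (pPlus m q)` and `cv4 (pMinus m q)`. -/

lemma cv4_pPlus_0 (m : ℝ) (q : Fin 3 → ℝ) : cv4 (pPlus m q) 0 = (Efun m q : ℂ) := rfl
lemma cv4_pPlus_1 (m : ℝ) (q : Fin 3 → ℝ) : cv4 (pPlus m q) 1 = (q 0 : ℂ) := rfl
lemma cv4_pPlus_2 (m : ℝ) (q : Fin 3 → ℝ) : cv4 (pPlus m q) 2 = (q 1 : ℂ) := rfl
lemma cv4_pPlus_3 (m : ℝ) (q : Fin 3 → ℝ) : cv4 (pPlus m q) 3 = (q 2 : ℂ) := rfl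
lemma cv4_pMinus_0 (m : ℝ) (q : Fin 3 → ℝ) : cv4 (pMinus m q) 0 = -(Efun m q : ℂ) := by
  simp [cv4, pMinus]
lemma cv4_pMinus_1 (m : ℝ) (q : Fin 3 → ℝ) : cv4 (pMinus m q) 1 = (q 0 : ℂ) := rfl
lemma cv4_pMinus_2 (m : ℝ) (q : Fin 3 → ℝ) : cv4 (pMinus m q) 2 = (q 1 : ℂ) := rfl
lemma cv4_pMinus_3 (m : ℝ) (q : Fin 3 → ℝ) : cv4 (pMinus m q) 3 = (q 2 : ℂ) := rfl

/-! Matrix algebra of the projections. -/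

lemma slash_sub (m : ℝ) (q : Fin 3 → ℝ) :
    slash (cv4 (pPlus m q)) - slash (cv4 (pMinus m q)) = (2 * (Efun m q : ℂ)) • γ0 := by
  simp only [slash, cv4_pPlus_0, cv4_pPlus_1, cv4_pPlus_2, cv4_pPlus_3,
    cv4_pMinus_0, cv4_pMinus_1, cv4_pMinus_2, cv4_pMinus_3]
  module

lemma g0_B_g0 (m : ℝ) (q : Fin 3 → ℝ) :
    γ0 * slash (cv4 (pMinus m q)) * γ0 = -slash (cv4 (pPlus m q)) := by
  rw [gamma_g0_slash_g0]
  simp only [slash, cv4_pPlus_0, cv4_pPlus_1, cv4_pPlus_2, cv4_pPlus_3,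
    cv4_pMinus_0, cv4_pMinus_1, cv4_pMinus_2, cv4_pMinus_3,
    Matrix.cons_val_zero, Matrix.cons_val_one, Matrix.head_cons]
  have h2 : (![-(Efun m q : ℂ), -(q 0 : ℂ), -(q 1 : ℂ), -(q 2 : ℂ)] : Fin 4 → ℂ) 2
      = -(q 1 : ℂ) := rfl
  have h3 : (![-(Efun m q : ℂ), -(q 0 : ℂ), -(q 1 : ℂ), -(q 2 : ℂ)] : Fin 4 → ℂ) 3
      = -(q 2 : ℂ) := rfl
  rw [h2, h3]
  module

lemma A_sq (m : ℝ) (hm : 0 < m) (q : Fin 3 → ℝ) :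
    slash (cv4 (pPlus m q)) * slash (cv4 (pPlus m q)) = ((m : ℂ) ^ 2) • 1 := by
  rw [gamma_slash_sq]
  congr 1
  rw [cv4_pPlus_0, cv4_pPlus_1, cv4_pPlus_2, cv4_pPlus_3]
  have : ((Efun m q : ℝ) : ℂ) ^ 2 = ((Efun m q ^ 2 : ℝ) : ℂ) := by push_cast; ring
  rw [this, Efun_sq m hm q]
  push_cast [Fin.sum_univ_three]
  ring

lemma Psum (m : ℝ) (hm : 0 < m) (q : Fin 3 → ℝ) : Pplus m q + Pminus m q = 1 := by
  rw [Pplus, Pminus, neg_smul, ← sub_eq_add_neg, ← smul_sub, ← sub_mul]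
  have : slash (cv4 (pPlus m q)) + (m : ℂ) • 1 - (slash (cv4 (pMinus m q)) + (m : ℂ) • 1)
      = slash (cv4 (pPlus m q)) - slash (cv4 (pMinus m q)) := by abel
  rw [this, slash_sub, Matrix.smul_mul, gamma_g00, smul_smul,
    inv_mul_cancel₀ (by simpa using EfunC_ne m hm q), one_smul]

lemma Pprod (m : ℝ) (hm : 0 < m) (q : Fin 3 → ℝ) : Pplus m q * Pminus m q = 0 := by
  rw [Pplus, Pminus, Matrix.smul_mul, Matrix.mul_smul, smul_smul]
  set A := slash (cv4 (pPlus m q))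
  set B := slash (cv4 (pMinus m q))
  have key : (A + (m : ℂ) • 1) * γ0 * ((B + (m : ℂ) • 1) * γ0) = 0 := by
    have h1 : γ0 * ((B + (m : ℂ) • 1) * γ0) = -A + (m : ℂ) • 1 := by
      rw [add_mul, Matrix.smul_mul, one_mul, mul_add, ← mul_assoc, g0_B_g0,
        Matrix.mul_smul, gamma_g00]
    calc (A + (m : ℂ) • 1) * γ0 * ((B + (m : ℂ) • 1) * γ0)
        = (A + (m : ℂ) • 1) * (γ0 * ((B + (m : ℂ) • 1) * γ0)) := by
          rw [mul_assoc]
      _ = (A + (m : ℂ) • 1) * (-A + (m : ℂ) • 1) := by rw [h1]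
      _ = ((m : ℂ) ^ 2) • 1 - A * A := by
          simp only [mul_add, add_mul, mul_neg, smul_neg, Matrix.smul_mul, Matrix.mul_smul,
            one_mul, mul_one, smul_smul, ← pow_two]
          abel_nf
          rw [smul_pow, one_pow]
      _ = 0 := by rw [A_sq m hm q, sub_self]
  rw [key, smul_zero]

lemma Pplus_idem (m : ℝ) (hm : 0 < m) (q : Fin 3 → ℝ) :
    Pplus m q * Pplus m q = Pplus m q := by
  have h := congrArg (fun M => Pplus m q * M) (Psum m hm q)
  simpa [mul_add, Pprod m hm q] using h

lemma Pminus_Pplus (m : ℝ) (hm : 0 < m) (q : Fin 3 → ℝ) :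
    Pminus m q * Pplus m q = 0 := by
  have h := congrArg (fun M => M * Pplus m q) (Psum m hm q)
  simp only [add_mul, one_mul] at h
  rw [Pplus_idem m hm q] at h
  linear_combination (norm := abel) h

lemma Pminus_idem (m : ℝ) (hm : 0 < m) (q : Fin 3 → ℝ) :
    Pminus m q * Pminus m q = Pminus m q := by
  have h := congrArg (fun M => Pminus m q * M) (Psum m hm q)
  simpa [mul_add, Pminus_Pplus m hm q] using h

/-! Hermiticity of the projections. -/

lemma starP_aux (m : ℝ) (q : Fin 3 → ℝ) (p : Fin 4 → ℝ) :
    ((slash (cv4 p) + (m : ℂ) • 1) * γ0)ᴴ = (slash (cv4 p) + (m : ℂ) • 1) * γ0 := by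
  rw [Matrix.conjTranspose_mul, Matrix.conjTranspose_add, Matrix.conjTranspose_smul,
    gamma_g0H, Matrix.conjTranspose_one, gamma_slash_conjT]
  have hsm : star (m : ℂ) = (m : ℂ) := by simp [Complex.star_def, Complex.conj_ofReal]
  rw [hsm, mul_add, Matrix.mul_smul, mul_one, ← mul_assoc, ← mul_assoc, gamma_g00, one_mul,
    add_mul, Matrix.smul_mul, one_mul]

lemma Pplus_herm (m : ℝ) (hm : 0 < m) (q : Fin 3 → ℝ) :
    (Pplus m q)ᴴ = Pplus m q := by
  rw [Pplus, Matrix.conjTranspose_smul, starP_aux m q]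
  congr 1
  simp [Complex.star_def, map_inv₀, _root_.map_mul, Complex.conj_ofReal]

lemma Pminus_herm (m : ℝ) (hm : 0 < m) (q : Fin 3 → ℝ) :
    (Pminus m q)ᴴ = Pminus m q := by
  rw [Pminus, Matrix.conjTranspose_smul, starP_aux m q]
  congr 1
  simp [Complex.star_def, map_inv₀, _root_.map_mul, Complex.conj_ofReal]

/-! Orthogonality. -/

lemma dot_ortho (m : ℝ) (hm : 0 < m) (q : Fin 3 → ℝ) (x y : Fin 4 → ℂ)
    (hx : Pplus m q *ᵥ x = x) (hy : Pminus m q *ᵥ y = y) :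
    ∑ i, (starRingEnd ℂ) (x i) * y i = 0 := by
  have : ∑ i, (starRingEnd ℂ) (x i) * y i = star x ⬝ᵥ y := by
    simp [dotProduct, Pi.star_apply, Complex.star_def]
  rw [this, ← hx, ← hy, Matrix.star_mulVec, Matrix.dotProduct_mulVec,
    Matrix.vecMul_vecMul, Pplus_herm m hm q, Pprod m hm q, Matrix.vecMul_zero,
    zero_dotProduct]

/-! Euclidean norm facts. -/

lemma enorm4_nonneg (x : Fin 4 → ℂ) : 0 ≤ enorm4 x := Real.sqrt_nonneg _

lemma enorm4_sq (x : Fin 4 → ℂ) : enorm4 x ^ 2 = ∑ i, ‖x i‖ ^ 2 := by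
  apply Real.sq_sqrt
  positivity

lemma enorm4_neg (x : Fin 4 → ℂ) : enorm4 (-x) = enorm4 x := by
  simp [enorm4]

lemma enorm4_smul_sq (r : ℝ) (x : Fin 4 → ℂ) :
    enorm4 (r • x) ^ 2 = r ^ 2 * enorm4 x ^ 2 := by
  simp only [enorm4_sq, Pi.smul_apply, norm_smul, Real.norm_eq_abs, Finset.mul_sum, mul_pow,
    sq_abs]

lemma pyth (x y : Fin 4 → ℂ) (h : ∑ i, (starRingEnd ℂ) (x i) * y i = 0) :
    enorm4 (x + y) ^ 2 = enorm4 x ^ 2 + enorm4 y ^ 2 := by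
  simp only [enorm4_sq, Pi.add_apply]
  have hz : ∑ i, x i * (starRingEnd ℂ) (y i) = 0 := by
    have := congrArg (starRingEnd ℂ) h
    simpa [map_sum, mul_comm] using this
  have hn : ∀ z : ℂ, ‖z‖ ^ 2 = Complex.normSq z := fun z => by
    rw [Complex.sq_norm]
  calc ∑ i, ‖x i + y i‖ ^ 2
      = ∑ i : Fin 4, (‖x i‖ ^ 2 + ‖y i‖ ^ 2 + 2 * (x i * (starRingEnd ℂ) (y i)).re) := by
        refine Finset.sum_congr rfl fun i _ => ?_
        rw [hn, hn, hn, Complex.normSq_add]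
    _ = (∑ i, ‖x i‖ ^ 2) + (∑ i, ‖y i‖ ^ 2)
        + 2 * (∑ i, x i * (starRingEnd ℂ) (y i)).re := by
        rw [Finset.sum_add_distrib, Finset.sum_add_distrib, ← Finset.mul_sum, Complex.re_sum]
    _ = (∑ i, ‖x i‖ ^ 2) + (∑ i, ‖y i‖ ^ 2) := by rw [hz]; simp

lemma norm_le_enorm4 (x : Fin 4 → ℂ) : ‖x‖ ≤ enorm4 x := by
  rw [pi_norm_le_iff_of_nonneg (enorm4_nonneg x)]
  intro i
  rw [← Real.sqrt_sq (norm_nonneg (x i))]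
  apply Real.sqrt_le_sqrt
  exact Finset.single_le_sum (f := fun j => ‖x j‖ ^ 2) (fun j _ => by positivity)
    (Finset.mem_univ i)

/-- `F_{3M} : H_M → L²(ℝ³,ℂ⁴)`, `(ψ₊,ψ₋) ↦ (p⃗ ↦ m(ψ₊(p⃗)-ψ₋(p⃗))/E(p⃗))`, is a unitary
isomorphism from the Hilbert space of pairs of square-integrable (w.r.t. the weight
`m²/E²`) sections of the upper/lower Dirac bundles onto `L²(ℝ³,ℂ⁴)`, with inverse
`F_{M3} : φ ↦ ((E/m)P₊φ, -(E/m)P₋φ)`; moreover `P₊ + P₋ = 1` and `P₊P₋ = 0`. -/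
theorem F3M_unitary (m : ℝ) (hm : 0 < m) :
    (∀ q : Fin 3 → ℝ, Pplus m q + Pminus m q = 1 ∧ Pplus m q * Pminus m q = 0) ∧
    (∀ ψp ψm : (Fin 3 → ℝ) → Fin 4 → ℂ, Measurable ψp → Measurable ψm →
      (∀ᵐ q ∂(volume : Measure (Fin 3 → ℝ)), Pplus m q *ᵥ ψp q = ψp q) →
      (∀ᵐ q ∂(volume : Measure (Fin 3 → ℝ)), Pminus m q *ᵥ ψm q = ψm q) →
      Integrable (fun q : Fin 3 → ℝ =>
        (enorm4 (ψp q) ^ 2 + enorm4 (ψm q) ^ 2) / Efun m q ^ 2) →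
      (MemLp (fun q => (m / Efun m q) • (ψp q - ψm q)) 2 (volume : Measure (Fin 3 → ℝ)) ∧
        ∫ q : Fin 3 → ℝ, enorm4 ((m / Efun m q) • (ψp q - ψm q)) ^ 2 =
          m ^ 2 * ∫ q : Fin 3 → ℝ,
            (enorm4 (ψp q) ^ 2 + enorm4 (ψm q) ^ 2) / Efun m q ^ 2) ∧
      (∀ᵐ q ∂(volume : Measure (Fin 3 → ℝ)),
        (Efun m q / m) • (Pplus m q *ᵥ ((m / Efun m q) • (ψp q - ψm q))) = ψp q ∧
        -((Efun m q / m) • (Pminus m q *ᵥ ((m / Efun m q) • (ψp q - ψm q)))) = ψm q)) ∧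
    (∀ φ : (Fin 3 → ℝ) → Fin 4 → ℂ, Measurable φ →
      MemLp φ 2 (volume : Measure (Fin 3 → ℝ)) →
      (∀ q, Pplus m q *ᵥ ((Efun m q / m) • (Pplus m q *ᵥ φ q)) =
        (Efun m q / m) • (Pplus m q *ᵥ φ q)) ∧
      (∀ q, Pminus m q *ᵥ (-((Efun m q / m) • (Pminus m q *ᵥ φ q))) =
        -((Efun m q / m) • (Pminus m q *ᵥ φ q))) ∧
      Integrable (fun q : Fin 3 → ℝ =>
        (enorm4 ((Efun m q / m) • (Pplus m q *ᵥ φ q)) ^ 2 +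
          enorm4 (-((Efun m q / m) • (Pminus m q *ᵥ φ q))) ^ 2) / Efun m q ^ 2) ∧
      (∀ q, (m / Efun m q) •
          ((Efun m q / m) • (Pplus m q *ᵥ φ q) - -((Efun m q / m) • (Pminus m q *ᵥ φ q)))
        = φ q)) := by
  have hmne : m ≠ 0 := hm.ne'
  refine ⟨fun q => ⟨Psum m hm q, Pprod m hm q⟩, ?_, ?_⟩
  · -- Part 2 : `F_{3M}` is well defined, isometric, and `F_{M3} ∘ F_{3M} = id`.
    intro ψp ψm hψp hψm hp hq hInt
    have hfmeas : Measurable fun q => (m / Efun m q) • (ψp q - ψm q) := by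
      exact (measurable_const.div (Efun_continuous m).measurable).smul (hψp.sub hψm)
    have hpt : ∀ᵐ q ∂(volume : Measure (Fin 3 → ℝ)),
        enorm4 ((m / Efun m q) • (ψp q - ψm q)) ^ 2
        = m ^ 2 * ((enorm4 (ψp q) ^ 2 + enorm4 (ψm q) ^ 2) / Efun m q ^ 2) := by
      filter_upwards [hp, hq] with q h1 h2
      have horto : ∑ i, (starRingEnd ℂ) (ψp q i) * (-(ψm q)) i = 0 := by
        have h0 := dot_ortho m hm q (ψp q) (ψm q) h1 h2
        simp only [Pi.neg_apply, mul_neg]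
        rw [Finset.sum_neg_distrib, h0, neg_zero]
      have hsum : enorm4 (ψp q - ψm q) ^ 2 = enorm4 (ψp q) ^ 2 + enorm4 (ψm q) ^ 2 := by
        rw [sub_eq_add_neg, pyth _ _ horto, enorm4_neg]
      rw [enorm4_smul_sq, hsum]
      have hEne := Efun_ne m hm q
      field_simp
      try ring
    refine ⟨⟨?_, ?_⟩, ?_⟩
    · rw [memLp_two_iff_integrable_sq_norm hfmeas.aestronglyMeasurable]
      refine Integrable.mono' (hInt.const_mul (m ^ 2))
        ((hfmeas.norm.pow_const 2).aestronglyMeasurable) ?_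
      filter_upwards [hpt] with q hq2
      rw [Real.norm_eq_abs, abs_of_nonneg (by positivity)]
      calc ‖(m / Efun m q) • (ψp q - ψm q)‖ ^ 2
          ≤ enorm4 ((m / Efun m q) • (ψp q - ψm q)) ^ 2 :=
            pow_le_pow_left₀ (norm_nonneg _) (norm_le_enorm4 _) 2
        _ = m ^ 2 * ((enorm4 (ψp q) ^ 2 + enorm4 (ψm q) ^ 2) / Efun m q ^ 2) := hq2
    · rw [← MeasureTheory.integral_const_mul]
      exact integral_congr_ae hpt
    · filter_upwards [hp, hq] with q h1 h2
      have hEne := Efun_ne m hm q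
      have hc1 : Efun m q / m * (m / Efun m q) = 1 := by field_simp
      constructor
      · have hmv : Pplus m q *ᵥ ((m / Efun m q) • (ψp q - ψm q))
            = (m / Efun m q) • ψp q := by
          rw [Matrix.mulVec_smul, Matrix.mulVec_sub, h1, ← h2, Matrix.mulVec_mulVec,
            Pprod m hm q, Matrix.zero_mulVec, sub_zero]
        rw [hmv, smul_smul, hc1, one_smul]
      · have hmv : Pminus m q *ᵥ ((m / Efun m q) • (ψp q - ψm q))
            = (m / Efun m q) • (-(ψm q)) := by
          rw [Matrix.mulVec_smul, Matrix.mulVec_sub, h2, ← h1, Matrix.mulVec_mulVec,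
            Pminus_Pplus m hm q, Matrix.zero_mulVec, zero_sub]
        rw [hmv, smul_neg, smul_neg, neg_neg, smul_smul, hc1, one_smul]
  · -- Part 3 : `F_{M3}` maps into `H_M` and `F_{3M} ∘ F_{M3} = id`.
    intro φ hφ hφ2
    refine ⟨?_, ?_, ?_, ?_⟩
    · intro q
      rw [Matrix.mulVec_smul, Matrix.mulVec_mulVec, Pplus_idem m hm q]
    · intro q
      rw [Matrix.mulVec_neg, Matrix.mulVec_smul, Matrix.mulVec_mulVec, Pminus_idem m hm q]
    · have hfun : (fun q => (enorm4 ((Efun m q / m) • (Pplus m q *ᵥ φ q)) ^ 2 +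
          enorm4 (-((Efun m q / m) • (Pminus m q *ᵥ φ q))) ^ 2) / Efun m q ^ 2)
          = fun q => (∑ i, ‖φ q i‖ ^ 2) / m ^ 2 := by
        funext q
        have h1 : Pplus m q *ᵥ (Pplus m q *ᵥ φ q) = Pplus m q *ᵥ φ q := by
          rw [Matrix.mulVec_mulVec, Pplus_idem m hm q]
        have h2 : Pminus m q *ᵥ (Pminus m q *ᵥ φ q) = Pminus m q *ᵥ φ q := by
          rw [Matrix.mulVec_mulVec, Pminus_idem m hm q]
        have hpy : enorm4 (Pplus m q *ᵥ φ q) ^ 2 + enorm4 (Pminus m q *ᵥ φ q) ^ 2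
            = enorm4 (φ q) ^ 2 := by
          rw [← pyth _ _ (dot_ortho m hm q _ _ h1 h2), ← Matrix.add_mulVec, Psum m hm q,
            Matrix.one_mulVec]
        rw [enorm4_neg, enorm4_smul_sq, enorm4_smul_sq, ← mul_add, hpy, enorm4_sq]
        have hEne := Efun_ne m hm q
        field_simp
        try ring
      rw [hfun]
      have hg : Integrable (fun q => ‖φ q‖ ^ 2) (volume : Measure (Fin 3 → ℝ)) :=
        (memLp_two_iff_integrable_sq_norm hφ.aestronglyMeasurable).1 hφ2
      have hmeas : Measurable fun q : Fin 3 → ℝ => (∑ i, ‖φ q i‖ ^ 2) / m ^ 2 := by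
        refine Measurable.div_const ?_ _
        exact Finset.measurable_sum _ fun i _ =>
          ((measurable_pi_apply i).comp hφ).norm.pow_const 2
      refine Integrable.mono' ((hg.const_mul 4).div_const (m ^ 2))
        hmeas.aestronglyMeasurable ?_
      filter_upwards with q
      rw [Real.norm_eq_abs, abs_of_nonneg (by positivity)]
      gcongr
      calc ∑ i, ‖φ q i‖ ^ 2 ≤ ∑ _i : Fin 4, ‖φ q‖ ^ 2 :=
          Finset.sum_le_sum fun i _ => pow_le_pow_left₀ (norm_nonneg _)
            (norm_le_pi_norm (φ q) i) 2
        _ = 4 * ‖φ q‖ ^ 2 := by simp [Finset.sum_const, mul_comm]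
    · intro q
      have hEne := Efun_ne m hm q
      have hc1 : m / Efun m q * (Efun m q / m) = 1 := by field_simp
      rw [sub_neg_eq_add, ← smul_add, ← Matrix.add_mulVec, Psum m hm q, Matrix.one_mulVec,
        smul_smul, hc1, one_smul]
end
end
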